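/- Let β, γ be real numbers with |β| < 1, let S be the shift operator on l²(ℤ, ℂ), and for ν ∈ ℝ, T ∈ ℕ let g_{ν,T}(t) = e^{2πiνt}/√(2T+1) for −T ≤ t ≤ T and 0 otherwise, and z_ν := e^{2πiν}. Then lim_{T→∞} ⟨γ S (I − βS)^{−2} g_{ν,T}, γ S (I − βS)^{−2} g_{ν,T}⟩ = |γ z_ν (1 − β z_ν)^{−2}|² = γ² |1 − β z_ν|^{−4}, where ⟨·,·⟩ is the complex l² inner product. -/

import Mathlib

open Filter

/-- The normalized complex wave `g_{ν,T}` of frequency `ν` on the window `[-T, T]`: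
`g_{ν,T} t = e^{2πiνt} / √(2T+1)` for `-T ≤ t ≤ T` and `0` otherwise. -/
noncomputable def waveWindow (ν : ℝ) (T : ℕ) : ℤ → ℂ :=
  fun t => if -(T : ℤ) ≤ t ∧ t ≤ (T : ℤ)
    then Complex.exp (2 * Real.pi * Complex.I * (ν : ℂ) * (t : ℂ)) / (Real.sqrt (2 * T + 1) : ℂ)
    else 0

/-- The von Neumann inverse `(I - βS)⁻¹ = ∑_{j ≥ 0} (βS)^j` applied to a complex
sequence `g`, where `S` is the shift `(S g) t = g (t + 1)`. -/
noncomputable def vonNeumannInvC (β : ℝ) (g : ℤ → ℂ) : ℤ → ℂ :=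
  fun t => ∑' j : ℕ, (β : ℂ) ^ j * g (t + j)

/-- `γ S (I - βS)⁻² g`, where `S` is the shift and `(I - βS)⁻²` the square of the
von Neumann inverse. -/
noncomputable def shiftedInvSq (β γ : ℝ) (g : ℤ → ℂ) : ℤ → ℂ :=
  fun t => (γ : ℂ) * vonNeumannInvC β (vonNeumannInvC β g) (t + 1)

open Finset

set_option maxHeartbeats 1000000

namespace Stmt17

noncomputable def zc (ν : ℝ) : ℂ := Complex.exp (2 * Real.pi * Complex.I * (ν : ℂ))

lemma zc_eq (ν : ℝ) : zc ν = Complex.exp ((2 * Real.pi * ν : ℝ) * Complex.I) := by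
  unfold zc; congr 1; push_cast; ring

lemma norm_zc (ν : ℝ) : ‖zc ν‖ = 1 := by
  rw [zc_eq]; exact Complex.norm_exp_ofReal_mul_I _

lemma zc_ne_zero (ν : ℝ) : zc ν ≠ 0 := Complex.exp_ne_zero _

lemma norm_zc_zpow (ν : ℝ) (t : ℤ) : ‖zc ν ^ t‖ = 1 := by
  rw [norm_zpow, norm_zc, one_zpow]

lemma waveWindow_eq {ν : ℝ} {T : ℕ} {t : ℤ} (h1 : -(T:ℤ) ≤ t) (h2 : t ≤ (T:ℤ)) :
    waveWindow ν T t = zc ν ^ t / (Real.sqrt (2 * T + 1) : ℂ) := by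
  rw [waveWindow, if_pos ⟨h1, h2⟩]
  congr 1
  rw [zc, ← Complex.exp_int_mul]
  congr 1
  ring

lemma waveWindow_eq_zero {ν : ℝ} {T : ℕ} {t : ℤ} (h : ¬(-(T:ℤ) ≤ t ∧ t ≤ (T:ℤ))) :
    waveWindow ν T t = 0 := by rw [waveWindow, if_neg h]

lemma one_le_sqrtN (T : ℕ) : 1 ≤ Real.sqrt (2 * T + 1) := by
  have h : (1:ℝ) ≤ 2 * T + 1 := by linarith [Nat.cast_nonneg (α:=ℝ) T]
  nlinarith [Real.sq_sqrt (by linarith : (0:ℝ) ≤ 2 * T + 1),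
    Real.sqrt_nonneg (2 * (T:ℝ) + 1)]

lemma sqrtN_pos (T : ℕ) : 0 < Real.sqrt (2 * T + 1) :=
  lt_of_lt_of_le one_pos (one_le_sqrtN T)

lemma sq_sqrtN (T : ℕ) : Real.sqrt (2 * T + 1) ^ 2 = 2 * T + 1 :=
  Real.sq_sqrt (by positivity)

lemma norm_waveWindow_le (ν : ℝ) (T : ℕ) (t : ℤ) :
    ‖waveWindow ν T t‖ ≤ (Real.sqrt (2 * T + 1))⁻¹ := by
  by_cases h : -(T:ℤ) ≤ t ∧ t ≤ (T:ℤ)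
  · rw [waveWindow_eq h.1 h.2, norm_div, norm_zc_zpow, Complex.norm_real,
      Real.norm_eq_abs, abs_of_pos (sqrtN_pos T), one_div]
  · rw [waveWindow_eq_zero h, norm_zero]
    positivity

lemma norm_waveWindow_le_one (ν : ℝ) (T : ℕ) (t : ℤ) : ‖waveWindow ν T t‖ ≤ 1 :=
  le_trans (norm_waveWindow_le ν T t) (inv_le_one_of_one_le₀ (one_le_sqrtN T))

end Stmt17

section
variable {β : ℝ}

noncomputable def kernC (β : ℝ) (m : ℕ) : ℂ := ((m:ℂ) + 1) * (β:ℂ) ^ m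

lemma norm_kernC (β : ℝ) (m : ℕ) : ‖kernC β m‖ = ((m:ℝ) + 1) * |β| ^ m := by
  have h : ((m:ℂ) + 1) = (((m:ℝ) + 1 : ℝ) : ℂ) := by push_cast; ring
  rw [kernC, norm_mul, h, Complex.norm_real, Real.norm_eq_abs,
    abs_of_nonneg (by positivity), ← Complex.ofReal_pow, Complex.norm_real,
    Real.norm_eq_abs, abs_pow]

lemma summable_kern_abs (hβ : |β| < 1) :
    Summable (fun m : ℕ => ((m:ℝ) + 1) * |β| ^ m) := by
  have h := summable_pow_mul_geometric_of_norm_lt_one (R := ℝ) 1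
    (r := |β|) (by rwa [Real.norm_eq_abs, abs_abs])
  have h0 : Summable (fun m : ℕ => |β| ^ m) :=
    summable_geometric_of_lt_one (abs_nonneg β) hβ
  exact ((h.add h0).congr (fun m => by ring))

/-- double von Neumann sum equals the convolution with `(m+1)β^m`. -/
lemma conv_eq (hβ : |β| < 1) (g : ℤ → ℂ) (hg : ∀ s, ‖g s‖ ≤ 1) (t : ℤ) :
    vonNeumannInvC β (vonNeumannInvC β g) t = ∑' m : ℕ, kernC β m * g (t + m) := by
  have hgeo : Summable (fun j : ℕ => |β| ^ j) :=
    summable_geometric_of_lt_one (abs_nonneg β) hβ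
  have hnorm : ∀ (k j : ℕ) (s : ℤ), ‖(β:ℂ) ^ k * ((β:ℂ) ^ j * g s)‖ ≤ |β| ^ k * |β| ^ j := by
    intro k j s
    rw [norm_mul, norm_mul, norm_pow, norm_pow, Complex.norm_real, Real.norm_eq_abs]
    calc |β| ^ k * (|β| ^ j * ‖g s‖) ≤ |β| ^ k * (|β| ^ j * 1) :=
          mul_le_mul_of_nonneg_left
            (mul_le_mul_of_nonneg_left (hg s) (pow_nonneg (abs_nonneg β) j))
            (pow_nonneg (abs_nonneg β) k)
      _ = |β| ^ k * |β| ^ j := by ring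
  have hin : ∀ s : ℤ, Summable (fun j : ℕ => (β:ℂ) ^ j * g (s + j)) := by
    intro s
    apply Summable.of_norm_bounded hgeo
    intro j
    rw [norm_mul, norm_pow, Complex.norm_real, Real.norm_eq_abs]
    calc |β| ^ j * ‖g (s + j)‖ ≤ |β| ^ j * 1 := by gcongr; exact hg _
      _ = |β| ^ j := mul_one _
  set f : ℕ × ℕ → ℂ := fun p => (β:ℂ) ^ p.1 * ((β:ℂ) ^ p.2 * g (t + p.1 + p.2)) with hf
  have hF2 : Summable f := by
    apply Summable.of_norm_bounded
      (hgeo.mul_of_nonneg hgeo (fun j => pow_nonneg (abs_nonneg β) j)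
        (fun j => pow_nonneg (abs_nonneg β) j))
    intro p
    exact hnorm p.1 p.2 _
  calc vonNeumannInvC β (vonNeumannInvC β g) t
      = ∑' k : ℕ, ∑' j : ℕ, f (k, j) := by
        unfold vonNeumannInvC
        refine tsum_congr fun k => ?_
        rw [← tsum_mul_left]
    _ = ∑' p : ℕ × ℕ, f p :=
        (Summable.tsum_prod' hF2 (fun k => (hin (t + k)).mul_left ((β:ℂ) ^ k))).symm
    _ = ∑' x : (Σ n : ℕ, {p // p ∈ Finset.HasAntidiagonal.antidiagonal n}),
          f (Finset.HasAntidiagonal.sigmaAntidiagonalEquivProd x) :=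
        (Finset.HasAntidiagonal.sigmaAntidiagonalEquivProd.tsum_eq f).symm
    _ = ∑' n : ℕ, ∑' p : {p // p ∈ Finset.HasAntidiagonal.antidiagonal n}, f p.1 := by
        exact Summable.tsum_sigma ((Equiv.summable_iff _).2 hF2)
    _ = ∑' n : ℕ, ∑ p ∈ Finset.HasAntidiagonal.antidiagonal n, f p :=
        tsum_congr fun n => Finset.tsum_subtype _ _
    _ = ∑' m : ℕ, kernC β m * g (t + m) := by
        refine tsum_congr fun n => ?_
        have : ∀ p ∈ Finset.HasAntidiagonal.antidiagonal n, f p = (β:ℂ) ^ n * g (t + n) := by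
          intro p hp
          rw [Finset.HasAntidiagonal.mem_antidiagonal] at hp
          have h1 : t + (p.1 : ℤ) + (p.2 : ℤ) = t + (n : ℤ) := by
            rw [add_assoc]; congr 1; exact_mod_cast congrArg (Nat.cast (R := ℤ)) hp
          rw [hf]; dsimp only
          rw [h1, ← mul_assoc, ← pow_add, hp]
        rw [Finset.sum_congr rfl this, Finset.sum_const, Nat.card_antidiagonal,
          nsmul_eq_mul, kernC]
        push_cast
        ring
end

namespace Stmt17

noncomputable def hseq (β ν : ℝ) (T : ℕ) (t : ℤ) : ℂ :=
  ∑' m : ℕ, kernC β m * waveWindow ν T (t + m)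

noncomputable def Pn (β ν : ℝ) (n : ℕ) : ℂ :=
  ∑ m ∈ Finset.range (n + 1), kernC β m * zc ν ^ m

noncomputable def Fv (β ν : ℝ) (T : ℕ) (t : ℤ) : ℝ := ‖hseq β ν T t‖ ^ 2

lemma Fv_nonneg (β ν : ℝ) (T : ℕ) (t : ℤ) : 0 ≤ Fv β ν T t := by
  rw [Fv]; positivity

lemma hseq_zero (β ν : ℝ) (T : ℕ) {t : ℤ} (ht : (T:ℤ) < t) : hseq β ν T t = 0 := by
  rw [hseq]
  have h : ∀ m : ℕ, kernC β m * waveWindow ν T (t + m) = 0 := by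
    intro m
    rw [waveWindow_eq_zero (by rintro ⟨-, h2⟩; omega), mul_zero]
  rw [tsum_congr h, tsum_zero]

lemma hseq_mid (β : ℝ) {ν : ℝ} {T : ℕ} {t : ℤ} (h1 : -(T:ℤ) ≤ t) (h2 : t ≤ (T:ℤ)) :
    hseq β ν T t = zc ν ^ t * Pn β ν ((T:ℤ) - t |>.toNat) / (Real.sqrt (2 * T + 1) : ℂ) := by
  set n := ((T:ℤ) - t).toNat with hndef
  have hn : ((n:ℤ)) = (T:ℤ) - t := Int.toNat_of_nonneg (by omega)
  have hz : ∀ m ∉ Finset.range (n + 1), kernC β m * waveWindow ν T (t + m) = 0 := by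
    intro m hm
    rw [Finset.mem_range] at hm
    push_neg at hm
    rw [waveWindow_eq_zero (by rintro ⟨-, h⟩; omega), mul_zero]
  rw [hseq, tsum_eq_sum hz]
  calc ∑ m ∈ Finset.range (n + 1), kernC β m * waveWindow ν T (t + m)
      = ∑ m ∈ Finset.range (n + 1), zc ν ^ t * (kernC β m * zc ν ^ m) / (Real.sqrt (2 * T + 1) : ℂ) := by
        refine Finset.sum_congr rfl fun m hm => ?_
        rw [Finset.mem_range] at hm
        have hm' : (m:ℤ) ≤ (T:ℤ) - t := by omega
        rw [waveWindow_eq (by omega) (by omega), zpow_add₀ (zc_ne_zero ν), zpow_natCast]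
        ring
    _ = zc ν ^ t * Pn β ν n / (Real.sqrt (2 * T + 1) : ℂ) := by
        rw [Pn, Finset.mul_sum, Finset.sum_div]

noncomputable def Ac (β : ℝ) : ℝ := (1 - |β|)⁻¹ + ((1 - |β|) ^ 2)⁻¹

noncomputable def tailB (β : ℝ) (k : ℕ) : ℝ := ((k:ℝ) + 1) * Ac β * |β| ^ k

lemma tailB_nonneg {β : ℝ} (hβ : |β| < 1) (k : ℕ) : 0 ≤ tailB β k := by
  have h1 : 0 < 1 - |β| := by linarith
  rw [tailB, Ac]
  positivity

lemma tsum_tail_le {β : ℝ} (hβ : |β| < 1) (k : ℕ) :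
    ∑' m : ℕ, (((m:ℝ) + (k:ℝ) + 1) * |β| ^ (m + k)) ≤ tailB β k := by
  set r := |β| with hr
  have hr0 : 0 ≤ r := abs_nonneg β
  have h1r : 0 < 1 - r := by linarith
  have hs0 : Summable (fun m : ℕ => r ^ m) := summable_geometric_of_lt_one hr0 hβ
  have hs1 : Summable (fun m : ℕ => (m:ℝ) * r ^ m) :=
    (hasSum_coe_mul_geometric_of_norm_lt_one (by rwa [Real.norm_eq_abs, abs_abs])).summable
  have heq : (fun m : ℕ => ((m:ℝ) + (k:ℝ) + 1) * r ^ (m + k))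
      = fun m : ℕ => r ^ k * ((m:ℝ) * r ^ m) + (r ^ k * ((k:ℝ) + 1)) * r ^ m := by
    funext m
    rw [pow_add]
    ring
  rw [heq, Summable.tsum_add (hs1.mul_left _) (hs0.mul_left _), tsum_mul_left, tsum_mul_left,
    tsum_geometric_of_lt_one hr0 hβ,
    tsum_coe_mul_geometric_of_norm_lt_one (by rwa [Real.norm_eq_abs, abs_abs])]
  rw [tailB, Ac, ← hr]
  have hd : (0:ℝ) ≤ ((1 - r) ^ 2)⁻¹ := by positivity
  have hc : (0:ℝ) ≤ (1 - r)⁻¹ := by positivity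
  have hx : (0:ℝ) ≤ r ^ k := pow_nonneg hr0 k
  have hK : (1:ℝ) ≤ (k:ℝ) + 1 := by
    have : (0:ℝ) ≤ (k:ℝ) := Nat.cast_nonneg k
    linarith
  have hdiv : r / (1 - r) ^ 2 ≤ ((1 - r) ^ 2)⁻¹ := by
    rw [div_eq_mul_inv]
    nlinarith
  nlinarith [mul_le_mul_of_nonneg_left hdiv hx,
    mul_nonneg (mul_nonneg (Nat.cast_nonneg (α:=ℝ) k) hd) hx,
    mul_nonneg (mul_nonneg (Nat.cast_nonneg (α:=ℝ) k) hc) hx]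

lemma hseq_tail {β : ℝ} (hβ : |β| < 1) {ν : ℝ} {T : ℕ} {t : ℤ} (ht : t < -(T:ℤ)) :
    ‖hseq β ν T t‖ ≤ tailB β ((-(T:ℤ) - t).toNat) * (Real.sqrt (2 * T + 1))⁻¹ := by
  set k := (-(T:ℤ) - t).toNat with hkdef
  have hk : ((k:ℤ)) = -(T:ℤ) - t := Int.toNat_of_nonneg (by omega)
  set N := Real.sqrt (2 * T + 1) with hNdef
  have hN : 0 < N := sqrtN_pos T
  have hterm : ∀ m : ℕ, ‖kernC β m * waveWindow ν T (t + m)‖ ≤ (((m:ℝ) + 1) * |β| ^ m) * N⁻¹ := by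
    intro m
    rw [norm_mul, norm_kernC]
    exact mul_le_mul_of_nonneg_left (norm_waveWindow_le ν T _) (by positivity)
  have hsnorm : Summable (fun m : ℕ => ‖kernC β m * waveWindow ν T (t + m)‖) :=
    Summable.of_nonneg_of_le (fun _ => norm_nonneg _) hterm
      ((summable_kern_abs hβ).mul_right N⁻¹)
  have h1 : ‖hseq β ν T t‖ ≤ ∑' m : ℕ, ‖kernC β m * waveWindow ν T (t + m)‖ :=
    norm_tsum_le_tsum_norm hsnorm
  have hzero : ∀ i ∈ Finset.range k, ‖kernC β i * waveWindow ν T (t + i)‖ = 0 := by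
    intro i hi
    rw [Finset.mem_range] at hi
    rw [waveWindow_eq_zero (by rintro ⟨hle, -⟩; omega), mul_zero, norm_zero]
  have hsplit := Summable.sum_add_tsum_nat_add k hsnorm
  rw [Finset.sum_eq_zero hzero, zero_add] at hsplit
  have htails : Summable (fun i : ℕ => ((i:ℝ) + (k:ℝ) + 1) * |β| ^ (i + k)) := by
    refine (((summable_nat_add_iff k).2 (summable_kern_abs hβ))).congr fun i => ?_
    push_cast
    ring
  have h2 : ∑' i : ℕ, ‖kernC β (i + k) * waveWindow ν T (t + ((i + k : ℕ) : ℤ))‖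
      ≤ ∑' i : ℕ, (((i:ℝ) + (k:ℝ) + 1) * |β| ^ (i + k)) * N⁻¹ := by
    refine Summable.tsum_le_tsum (fun i => ?_) ((summable_nat_add_iff k).2 hsnorm)
      (htails.mul_right N⁻¹)
    refine le_trans (hterm (i + k)) (le_of_eq ?_)
    push_cast
    ring
  calc ‖hseq β ν T t‖
      ≤ ∑' m : ℕ, ‖kernC β m * waveWindow ν T (t + m)‖ := h1
    _ = ∑' i : ℕ, ‖kernC β (i + k) * waveWindow ν T (t + ((i + k : ℕ) : ℤ))‖ := hsplit.symm
    _ ≤ ∑' i : ℕ, (((i:ℝ) + (k:ℝ) + 1) * |β| ^ (i + k)) * N⁻¹ := h2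
    _ = (∑' i : ℕ, ((i:ℝ) + (k:ℝ) + 1) * |β| ^ (i + k)) * N⁻¹ := tsum_mul_right
    _ ≤ tailB β k * N⁻¹ :=
        mul_le_mul_of_nonneg_right (tsum_tail_le hβ k) (by positivity)

lemma Fv_mid {β ν : ℝ} {T : ℕ} {k : ℕ} (hk : k < 2 * T + 1) :
    Fv β ν T ((T:ℤ) - k) = ‖Pn β ν k‖ ^ 2 / (2 * T + 1) := by
  have h1 : -(T:ℤ) ≤ (T:ℤ) - k := by omega
  have h2 : (T:ℤ) - k ≤ (T:ℤ) := by omega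
  have h3 : ((T:ℤ) - ((T:ℤ) - k)).toNat = k := by omega
  rw [Fv, hseq_mid β h1 h2, h3, norm_div, norm_mul, norm_zc_zpow, one_mul,
    Complex.norm_real, Real.norm_eq_abs, abs_of_pos (sqrtN_pos T), div_pow, sq_sqrtN]

lemma Fv_tail_le {β : ℝ} (hβ : |β| < 1) (ν : ℝ) (T : ℕ) (k : ℕ) :
    Fv β ν T (-(T:ℤ) - 1 - k) ≤ tailB β (k + 1) ^ 2 / (2 * T + 1) := by
  have h := hseq_tail hβ (ν := ν) (T := T) (t := -(T:ℤ) - 1 - k) (by omega)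
  have harg : (-(T:ℤ) - (-(T:ℤ) - 1 - k)).toNat = k + 1 := by omega
  rw [harg] at h
  rw [Fv]
  calc ‖hseq β ν T (-(T:ℤ) - 1 - k)‖ ^ 2
      ≤ (tailB β (k + 1) * (Real.sqrt (2 * T + 1))⁻¹) ^ 2 :=
        pow_le_pow_left₀ (norm_nonneg _) h 2
    _ = tailB β (k + 1) ^ 2 / (2 * T + 1) := by
        rw [mul_pow, inv_pow, sq_sqrtN, div_eq_mul_inv]

lemma sTB2 {β : ℝ} (hβ : |β| < 1) : Summable (fun k : ℕ => tailB β (k + 1) ^ 2) := by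
  set r := |β| with hr
  have hr0 : 0 ≤ r := abs_nonneg β
  have hq : ‖r ^ 2‖ < 1 := by
    rw [Real.norm_eq_abs, abs_of_nonneg (by positivity)]
    nlinarith
  have h2 := summable_pow_mul_geometric_of_norm_lt_one (R := ℝ) 2 hq
  have h1 := summable_pow_mul_geometric_of_norm_lt_one (R := ℝ) 1 hq
  have h0 : Summable (fun n : ℕ => (r ^ 2) ^ n) :=
    summable_geometric_of_lt_one (by positivity) (by nlinarith)
  have base : Summable (fun k : ℕ => ((k:ℝ) + 2) ^ 2 * (r ^ 2) ^ k) := by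
    refine ((h2.add (h1.mul_left 4)).add (h0.mul_left 4)).congr fun k => ?_
    ring
  refine (base.mul_left (Ac β ^ 2 * r ^ 2)).congr fun k => ?_
  rw [tailB]
  push_cast
  ring

lemma summable_Fv_far {β : ℝ} (hβ : |β| < 1) (ν : ℝ) (T : ℕ) :
    Summable (fun k : ℕ => Fv β ν T (-(T:ℤ) - 1 - k)) :=
  Summable.of_nonneg_of_le (fun k => Fv_nonneg β ν T _)
    (fun k => Fv_tail_le hβ ν T k) ((sTB2 hβ).div_const _)

lemma summable_Fv_shift {β : ℝ} (hβ : |β| < 1) (ν : ℝ) (T : ℕ) :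
    Summable (fun k : ℕ => Fv β ν T ((T:ℤ) - k)) := by
  rw [← summable_nat_add_iff (2 * T + 1)]
  refine (summable_Fv_far hβ ν T).congr fun k => ?_
  congr 1
  push_cast
  ring

lemma summable_Fv {β : ℝ} (hβ : |β| < 1) (ν : ℝ) (T : ℕ) :
    Summable (fun t : ℤ => Fv β ν T t) := by
  have hinj : Function.Injective (fun k : ℕ => (T:ℤ) - k) := by
    intro a b h
    simp only at h
    omega
  have hsupp : ∀ x ∉ Set.range (fun k : ℕ => (T:ℤ) - k), Fv β ν T x = 0 := by
    intro x hx
    have hxT : (T:ℤ) < x := by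
      by_contra hle
      push_neg at hle
      exact hx ⟨((T:ℤ) - x).toNat, by simp only; omega⟩
    rw [Fv, hseq_zero β ν T hxT, norm_zero]
    norm_num
  exact (hinj.summable_iff hsupp).1 (summable_Fv_shift hβ ν T)

lemma total_eq {β : ℝ} (hβ : |β| < 1) (ν : ℝ) (T : ℕ) :
    ∑' t : ℤ, Fv β ν T t
      = (∑ k ∈ Finset.range (2 * T + 1), ‖Pn β ν k‖ ^ 2) / (2 * T + 1)
        + ∑' k : ℕ, Fv β ν T (-(T:ℤ) - 1 - k) := by
  have hinj : Function.Injective (fun k : ℕ => (T:ℤ) - k) := by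
    intro a b h
    simp only at h
    omega
  have hsupp : Function.support (Fv β ν T) ⊆ Set.range (fun k : ℕ => (T:ℤ) - k) := by
    intro x hx
    by_contra hmem
    have hxT : (T:ℤ) < x := by
      by_contra hle
      push_neg at hle
      exact hmem ⟨((T:ℤ) - x).toNat, by simp only; omega⟩
    exact hx (by rw [Fv, hseq_zero β ν T hxT, norm_zero]; norm_num)
  rw [← hinj.tsum_eq hsupp, ← Summable.sum_add_tsum_nat_add (2 * T + 1) (summable_Fv_shift hβ ν T)]
  congr 1
  · rw [Finset.sum_div]
    exact Finset.sum_congr rfl fun k hk => Fv_mid (Finset.mem_range.1 hk)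
  · refine tsum_congr fun k => ?_
    congr 1
    push_cast
    ring

end Stmt17

namespace Stmt17

lemma norm_w_lt {β : ℝ} (hβ : |β| < 1) (ν : ℝ) : ‖(β:ℂ) * zc ν‖ < 1 := by
  rw [norm_mul, Complex.norm_real, Real.norm_eq_abs, norm_zc, mul_one]
  exact hβ

lemma Pn_tendsto {β : ℝ} (hβ : |β| < 1) (ν : ℝ) :
    Filter.Tendsto (fun n => Pn β ν n) Filter.atTop
      (nhds (1 / (1 - (β:ℂ) * zc ν) ^ 2)) := by
  have hw := norm_w_lt hβ ν
  have hs := hasSum_choose_mul_geometric_of_norm_lt_one 1 hw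
  have heq : (fun m : ℕ => kernC β m * zc ν ^ m)
      = fun m : ℕ => ((m + 1).choose 1 : ℂ) * ((β:ℂ) * zc ν) ^ m := by
    funext m
    rw [Nat.choose_one_right, kernC, mul_pow]
    push_cast
    ring
  have hs' : HasSum (fun m : ℕ => kernC β m * zc ν ^ m) (1 / (1 - (β:ℂ) * zc ν) ^ 2) := by
    rw [heq]
    exact hs
  have h := hs'.tendsto_sum_nat.comp (Filter.tendsto_add_atTop_nat 1)
  exact h.congr fun n => rfl

lemma twoT1_tendsto : Filter.Tendsto (fun T : ℕ => (2 * (T:ℝ) + 1)) Filter.atTop Filter.atTop := by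
  apply Filter.tendsto_atTop_add_const_right
  exact (tendsto_natCast_atTop_atTop (R := ℝ)).const_mul_atTop two_pos

lemma cesaro_piece {β : ℝ} (hβ : |β| < 1) (ν : ℝ) :
    Filter.Tendsto
      (fun T : ℕ => (∑ k ∈ Finset.range (2 * T + 1), ‖Pn β ν k‖ ^ 2) / (2 * (T:ℝ) + 1))
      Filter.atTop (nhds (‖(1:ℂ) / (1 - (β:ℂ) * zc ν) ^ 2‖ ^ 2)) := by
  have h1 : Filter.Tendsto (fun n => ‖Pn β ν n‖ ^ 2) Filter.atTop
      (nhds (‖(1:ℂ) / (1 - (β:ℂ) * zc ν) ^ 2‖ ^ 2)) := ((Pn_tendsto hβ ν).norm).pow 2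
  have h2 := h1.cesaro
  have h3 : Filter.Tendsto (fun T : ℕ => 2 * T + 1) Filter.atTop Filter.atTop :=
    Filter.tendsto_atTop_mono (fun n => by simp only [id_eq]; omega) Filter.tendsto_id
  refine (h2.comp h3).congr fun T => ?_
  simp only [Function.comp_apply]
  rw [div_eq_inv_mul]
  push_cast
  ring_nf

lemma E_tendsto {β : ℝ} (hβ : |β| < 1) (ν : ℝ) :
    Filter.Tendsto (fun T : ℕ => ∑' k : ℕ, Fv β ν T (-(T:ℤ) - 1 - k))
      Filter.atTop (nhds 0) := by
  have hbound : ∀ T : ℕ, ∑' k : ℕ, Fv β ν T (-(T:ℤ) - 1 - k)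
      ≤ (∑' k : ℕ, tailB β (k + 1) ^ 2) / (2 * (T:ℝ) + 1) := by
    intro T
    calc ∑' k : ℕ, Fv β ν T (-(T:ℤ) - 1 - k)
        ≤ ∑' k : ℕ, tailB β (k + 1) ^ 2 / (2 * (T:ℝ) + 1) := by
          refine Summable.tsum_le_tsum (fun k => ?_) (summable_Fv_far hβ ν T) ((sTB2 hβ).div_const _)
          have := Fv_tail_le hβ ν T k
          refine le_trans this (le_of_eq ?_)
          push_cast
          ring
      _ = (∑' k : ℕ, tailB β (k + 1) ^ 2) / (2 * (T:ℝ) + 1) := by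
          rw [tsum_div_const]
  have hlim : Filter.Tendsto (fun T : ℕ => (∑' k : ℕ, tailB β (k + 1) ^ 2) / (2 * (T:ℝ) + 1))
      Filter.atTop (nhds 0) :=
    Filter.Tendsto.div_atTop tendsto_const_nhds twoT1_tendsto
  exact squeeze_zero (fun T => tsum_nonneg fun k => Fv_nonneg β ν T _) hbound hlim

end Stmt17

open Stmt17

/-- For `|β| < 1` and `z_ν = e^{2πiν}`, the complex `l²` inner
product satisfies
`⟨γ S (I - βS)⁻² g_{ν,T}, γ S (I - βS)⁻² g_{ν,T}⟩ → |γ z_ν (1 - β z_ν)⁻²|² = γ² |1 - β z_ν|⁻⁴`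
as `T → ∞`. -/
theorem stmt_17 (β γ : ℝ) (hβ : |β| < 1) (ν : ℝ) :
    Tendsto (fun T : ℕ =>
        ∑' t : ℤ, (starRingEnd ℂ) (shiftedInvSq β γ (waveWindow ν T) t)
          * shiftedInvSq β γ (waveWindow ν T) t)
      atTop (nhds ((γ ^ 2 *
        (‖(1 : ℂ) - (β : ℂ) * Complex.exp (2 * Real.pi * Complex.I * (ν : ℂ))‖ ^ 4)⁻¹ : ℝ) : ℂ)) := by
  have key : ∀ T : ℕ,
      (∑' t : ℤ, (starRingEnd ℂ) (shiftedInvSq β γ (waveWindow ν T) t)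
        * shiftedInvSq β γ (waveWindow ν T) t)
      = ((γ ^ 2 * ∑' t : ℤ, Fv β ν T t : ℝ) : ℂ) := by
    intro T
    have hconv : ∀ t : ℤ, shiftedInvSq β γ (waveWindow ν T) t = (γ:ℂ) * hseq β ν T (t + 1) := by
      intro t
      rw [shiftedInvSq]
      congr 1
      exact conv_eq hβ _ (norm_waveWindow_le_one ν T) (t + 1)
    calc (∑' t : ℤ, (starRingEnd ℂ) (shiftedInvSq β γ (waveWindow ν T) t)
            * shiftedInvSq β γ (waveWindow ν T) t)
        = ∑' t : ℤ, ((γ ^ 2 * Fv β ν T (t + 1) : ℝ) : ℂ) := by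
          refine tsum_congr fun t => ?_
          rw [hconv t, mul_comm ((starRingEnd ℂ) _), Complex.mul_conj, Complex.normSq_eq_norm_sq,
            norm_mul, mul_pow, Complex.norm_real, Real.norm_eq_abs,
            sq_abs, Fv]
      _ = ((∑' t : ℤ, γ ^ 2 * Fv β ν T (t + 1) : ℝ) : ℂ) := (Complex.ofReal_tsum _).symm
      _ = ((γ ^ 2 * ∑' t : ℤ, Fv β ν T t : ℝ) : ℂ) := by
          rw [tsum_mul_left]
          congr 2
          exact (Equiv.addRight (1:ℤ)).tsum_eq (Fv β ν T)
  have htot : Filter.Tendsto (fun T : ℕ => ∑' t : ℤ, Fv β ν T t) Filter.atTop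
      (nhds (‖(1:ℂ) / (1 - (β:ℂ) * zc ν) ^ 2‖ ^ 2)) := by
    have h := (cesaro_piece hβ ν).add (E_tendsto hβ ν)
    rw [add_zero] at h
    refine h.congr fun T => ?_
    rw [← total_eq hβ ν T]
  have hval : ‖(1:ℂ) / (1 - (β:ℂ) * zc ν) ^ 2‖ ^ 2
      = (‖(1 : ℂ) - (β : ℂ) * Complex.exp (2 * Real.pi * Complex.I * (ν : ℂ))‖ ^ 4)⁻¹ := by
    rw [norm_div, norm_one, norm_pow, div_pow, one_pow, ← pow_mul, one_div]
    rfl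
  have hfin := (Complex.continuous_ofReal.tendsto _).comp (htot.const_mul (γ ^ 2))
  rw [hval] at hfin
  refine hfin.congr fun T => ?_
  simp only [Function.comp_apply]
  exact (key T).symm
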